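/- Let (P, ≤, ', ⊥, ⊤) be a bounded strongly modular poset with a complementation ' (i.e., U(x,x') = {⊤} and L(x,x') = {⊥} for all x). Define M(x,y) := L(U(x,y') ∪ {y}) and R(x,y) := L(U(L(x,y) ∪ {x'})). Then for all a, b, c ∈ P: M(a,b) ⊆ L({c}) if and only if L({a}) ⊆ R(b,c) (operator left adjointness). -/
import Mathlib


/-- In a bounded strongly modular poset with complementation `n`,
with `M(x,y) := L(U(x, n y) ∪ {y})` and `R(x,y) := L(U(L(x,y) ∪ {n x}))`,
operator left adjointness holds: `M(a,b) ⊆ L({c}) ↔ L({a}) ⊆ R(b,c)`. -/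
theorem stmt_9 {P : Type*} [PartialOrder P] [BoundedOrder P] (n : P → P)
    (h3 : ∀ x y z : P,
      lowerBounds (upperBounds {x, y} ∪ upperBounds {x, z}) =
        lowerBounds (upperBounds ({x} ∪ lowerBounds ({y} ∪ upperBounds {x, z}))))
    (h4 : ∀ x y z : P,
      lowerBounds (upperBounds (lowerBounds {x, z} ∪ {y}) ∪ {z}) =
        lowerBounds (upperBounds (lowerBounds {x, z} ∪ lowerBounds {y, z})))
    (hU : ∀ x : P, upperBounds {x, n x} = {⊤})
    (hL : ∀ x : P, lowerBounds {x, n x} = {⊥}) :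
    ∀ a b c : P,
      lowerBounds (upperBounds {a, n b} ∪ {b}) ⊆ lowerBounds {c} ↔
        lowerBounds {a} ⊆ lowerBounds (upperBounds (lowerBounds {b, c} ∪ {n b})) := by
  intro a b c
  constructor
  · intro h
    -- Identity (3) with x = n b, y = b, z = a
    have h3' := h3 (n b) b a
    rw [Set.pair_comm (n b) b, hU b, Set.pair_comm (n b) a, lowerBounds_union,
      lowerBounds_singleton, Set.Iic_top, Set.univ_inter] at h3'
    -- h3' : lowerBounds (upperBounds {a, n b})
    --     = lowerBounds (upperBounds ({n b} ∪ lowerBounds ({b} ∪ upperBounds {a, n b})))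
    have hS : lowerBounds ({b} ∪ upperBounds ({a, n b} : Set P)) ⊆
        lowerBounds ({b, c} : Set P) := by
      intro x hx
      have hxb : x ≤ b := hx (Set.mem_union_left _ rfl)
      have hxc : x ≤ c := by
        have hx' : x ∈ lowerBounds (upperBounds {a, n b} ∪ {b}) := by
          intro y hy
          rcases hy with hy | hy
          · exact hx (Set.mem_union_right _ hy)
          · exact hy ▸ hxb
        exact h hx' rfl
      intro y hy
      rcases hy with hy | hy
      · exact hy ▸ hxb
      · exact hy ▸ hxc
    have hsub : lowerBounds (upperBounds ({n b} ∪
          lowerBounds ({b} ∪ upperBounds ({a, n b} : Set P)))) ⊆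
        lowerBounds (upperBounds ({n b} ∪ lowerBounds ({b, c} : Set P))) :=
      lowerBounds_mono_set (upperBounds_mono_set (Set.union_subset_union_right _ hS))
    have haself : a ∈ lowerBounds (upperBounds ({a, n b} : Set P)) :=
      fun u hu => hu (Set.mem_insert _ _)
    have ha : a ∈ lowerBounds (upperBounds (lowerBounds ({b, c} : Set P) ∪ {n b})) := by
      rw [Set.union_comm]
      exact hsub (h3' ▸ haself)
    intro x hx u hu
    exact le_trans (hx rfl) (ha hu)
  · intro h
    have ha : a ∈ lowerBounds (upperBounds (lowerBounds ({b, c} : Set P) ∪ {n b})) :=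
      h (fun y hy => le_of_eq hy.symm)
    -- Identity (4) with x = c, y = n b, z = b
    have h4' := h4 c (n b) b
    rw [Set.pair_comm c b, Set.pair_comm (n b) b, hL b,
      show upperBounds (lowerBounds ({b, c} : Set P) ∪ {⊥}) =
          upperBounds (lowerBounds ({b, c} : Set P)) from by
        rw [Set.union_singleton, upperBounds_insert, Set.Ici_bot, Set.univ_inter]] at h4'
    -- h4' : lowerBounds (upperBounds (lowerBounds {b,c} ∪ {n b}) ∪ {b})
    --     = lowerBounds (upperBounds (lowerBounds {b,c}))
    intro x hx
    have hxb : x ≤ b := hx (Set.mem_union_right _ rfl)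
    have hxT : x ∈ lowerBounds (upperBounds (lowerBounds ({b, c} : Set P) ∪ {n b})) := by
      intro u hu
      refine hx (Set.mem_union_left _ ?_)
      intro y hy
      rcases hy with hy | hy
      · exact hy ▸ ha hu
      · exact hy ▸ hu (Set.mem_union_right _ rfl)
    have hx2 : x ∈ lowerBounds (upperBounds (lowerBounds ({b, c} : Set P) ∪ {n b}) ∪ {b}) := by
      intro y hy
      rcases hy with hy | hy
      · exact hxT hy
      · exact hy ▸ hxb
    rw [h4'] at hx2
    have hc : c ∈ upperBounds (lowerBounds ({b, c} : Set P)) :=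
      fun y hy => hy (Set.mem_insert_iff.mpr (Or.inr rfl))
    intro y hy
    exact hy ▸ hx2 hc
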